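/- Fix a positive integer k and let λ, μ, ν be integers with 0 ≤ λ, μ, ν ≤ k. If ν appears in the level-k affine su(2) fusion product [λ]∗[μ], i.e. λ+μ−ν is even and |λ−μ| ≤ ν ≤ min(λ+μ, 2k−λ−μ), then T_{λ,μ}^ν is nonempty. -/

import Mathlib

open Matrix Complex Real

noncomputable section

/-- `SU(2)`: 2×2 complex unitary matrices with determinant 1. -/
def SU2 : Set (Matrix (Fin 2) (Fin 2) ℂ) :=
  {g | g ∈ Matrix.unitaryGroup (Fin 2) ℂ ∧ g.det = 1}

/-- The diagonal matrix `t_λ = diag(exp(iπλ/k), exp(−iπλ/k))`. -/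
def tmat (k : ℕ) (l : ℝ) : Matrix (Fin 2) (Fin 2) ℂ :=
  Matrix.diagonal ![Complex.exp (Complex.I * ((Real.pi * l / k : ℝ) : ℂ)),
    Complex.exp (-(Complex.I * ((Real.pi * l / k : ℝ) : ℂ)))]

/-- The conjugacy class `C_λ` of `t_λ` in `SU(2)`. -/
def conjClass (k : ℕ) (l : ℝ) : Set (Matrix (Fin 2) (Fin 2) ℂ) :=
  {g | ∃ x ∈ SU2, g = x * tmat k l * x⁻¹}

/-- `T_{λ,μ}^ν = {(g,h) : g ∈ C_λ, h ∈ C_μ, g·h ∈ C_ν}`. -/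
def Tset (k : ℕ) (l m n : ℝ) :
    Set (Matrix (Fin 2) (Fin 2) ℂ × Matrix (Fin 2) (Fin 2) ℂ) :=
  {p | p.1 ∈ conjClass k l ∧ p.2 ∈ conjClass k m ∧ p.1 * p.2 ∈ conjClass k n}

namespace Stmt1Aux


lemma mat2_ext {a b c d a' b' c' d' : ℂ} (h1 : a = a') (h2 : b = b') (h3 : c = c')
    (h4 : d = d') : !![a,b;c,d] = !![a',b';c',d'] := by rw [h1, h2, h3, h4]

lemma smul_lit (z a b c d : ℂ) : z • !![a,b;c,d] = !![z*a,z*b;z*c,z*d] := by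
  ext i j; fin_cases i <;> fin_cases j <;> simp

lemma diag2 (x y : ℂ) : Matrix.diagonal ![x,y] = !![x,0;0,y] := by
  ext i j; fin_cases i <;> fin_cases j <;> simp [Matrix.diagonal]

lemma expI (g : ℝ) : Complex.exp (Complex.I * (g:ℂ))
    = ((Real.cos g : ℝ):ℂ) + ((Real.sin g : ℝ):ℂ) * Complex.I := by
  rw [mul_comm, Complex.exp_mul_I, Complex.ofReal_cos, Complex.ofReal_sin]

lemma expnegI (g : ℝ) : Complex.exp (-(Complex.I * (g:ℂ)))
    = ((Real.cos g:ℝ):ℂ) - ((Real.sin g:ℝ):ℂ) * Complex.I := by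
  have h : -(Complex.I * (g:ℂ)) = ((-g : ℝ) : ℂ) * Complex.I := by push_cast; ring
  rw [h, Complex.exp_mul_I, Complex.ofReal_cos, Complex.ofReal_sin]
  push_cast
  rw [Complex.cos_neg, Complex.sin_neg]
  ring

lemma tmat_eq (k : ℕ) (l : ℝ) :
    tmat k l = !![((Real.cos (Real.pi*l/k) : ℝ):ℂ) + ((Real.sin (Real.pi*l/k) : ℝ):ℂ) * Complex.I, 0;
      0, ((Real.cos (Real.pi*l/k) : ℝ):ℂ) - ((Real.sin (Real.pi*l/k) : ℝ):ℂ) * Complex.I] := by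
  rw [tmat, expI, expnegI, diag2]

lemma core (c s y r : ℝ) (b : ℂ)
    (hbbc : b * (starRingEnd ℂ) b = (s:ℂ)^2 - (y:ℂ)^2)
    (hr2c : ((r:ℝ):ℂ)^2 = 2*(s:ℂ)*((s:ℂ)-(y:ℂ)))
    (hrne : (r:ℝ) ≠ 0) :
    ∃ x ∈ SU2,
      !![(c:ℂ)+(y:ℂ)*Complex.I, b; -((starRingEnd ℂ) b), (c:ℂ)-(y:ℂ)*Complex.I]
        = x * !![(c:ℂ)+(s:ℂ)*Complex.I, 0; 0, (c:ℂ)-(s:ℂ)*Complex.I] * x⁻¹ := by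
  have hone : ((r⁻¹:ℝ):ℂ) * ((r⁻¹:ℝ):ℂ) * ((r:ℝ):ℂ)^2 = 1 := by
    have hrc : ((r:ℝ):ℂ) ≠ 0 := Complex.ofReal_ne_zero.mpr hrne
    push_cast
    field_simp
  set X0 : Matrix (Fin 2) (Fin 2) ℂ :=
    !![b, ((s:ℂ)-(y:ℂ))*Complex.I; ((s:ℂ)-(y:ℂ))*Complex.I, (starRingEnd ℂ) b] with hX0
  have hstar0 : star X0 = !![(starRingEnd ℂ) b, -(((s:ℂ)-(y:ℂ))*Complex.I);
      -(((s:ℂ)-(y:ℂ))*Complex.I), b] := by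
    rw [Matrix.star_eq_conjTranspose, hX0]
    ext i j
    fin_cases i <;> fin_cases j <;>
      simp [Matrix.conjTranspose_apply, Complex.conj_ofReal] <;> ring
  have hprod : X0 * star X0 = !![((r:ℝ):ℂ)^2, 0; 0, ((r:ℝ):ℂ)^2] := by
    rw [hstar0, hX0, Matrix.mul_fin_two]
    refine mat2_ext ?_ ?_ ?_ ?_
    · linear_combination hbbc - ((s:ℂ)-(y:ℂ))^2 * Complex.I_sq - hr2c
    · ring
    · ring
    · linear_combination hbbc - ((s:ℂ)-(y:ℂ))^2 * Complex.I_sq - hr2c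
  have hdet0 : X0.det = ((r:ℝ):ℂ)^2 := by
    rw [hX0, Matrix.det_fin_two_of]
    linear_combination hbbc - ((s:ℂ)-(y:ℂ))^2 * Complex.I_sq - hr2c
  have hG2 : X0 * !![(c:ℂ)+(s:ℂ)*Complex.I, 0; 0, (c:ℂ)-(s:ℂ)*Complex.I] * star X0
      = !![((r:ℝ):ℂ)^2 * ((c:ℂ)+(y:ℂ)*Complex.I), ((r:ℝ):ℂ)^2 * b;
          ((r:ℝ):ℂ)^2 * (-((starRingEnd ℂ) b)), ((r:ℝ):ℂ)^2 * ((c:ℂ)-(y:ℂ)*Complex.I)] := by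
    rw [hstar0, hX0, Matrix.mul_fin_two, Matrix.mul_fin_two]
    refine mat2_ext ?_ ?_ ?_ ?_
    · linear_combination ((c:ℂ)+(s:ℂ)*Complex.I) * hbbc
        - ((s:ℂ)-(y:ℂ))^2 * ((c:ℂ)-(s:ℂ)*Complex.I) * Complex.I_sq
        - ((c:ℂ)+(y:ℂ)*Complex.I) * hr2c
    · linear_combination (-2*(s:ℂ)*((s:ℂ)-(y:ℂ))*b) * Complex.I_sq - b * hr2c
    · linear_combination (2*(s:ℂ)*((s:ℂ)-(y:ℂ))*((starRingEnd ℂ) b)) * Complex.I_sq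
        + ((starRingEnd ℂ) b) * hr2c
    · linear_combination ((c:ℂ)-(s:ℂ)*Complex.I) * hbbc
        - ((s:ℂ)-(y:ℂ))^2 * ((c:ℂ)+(s:ℂ)*Complex.I) * Complex.I_sq
        - ((c:ℂ)-(y:ℂ)*Complex.I) * hr2c
  have hsr : star (((r⁻¹:ℝ):ℂ) • X0) = ((r⁻¹:ℝ):ℂ) • star X0 := by
    rw [Matrix.star_eq_conjTranspose, Matrix.conjTranspose_smul,
      Matrix.star_eq_conjTranspose]
    congr 1
    rw [Complex.star_def]
    exact Complex.conj_ofReal _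
  have hUnit : (((r⁻¹:ℝ):ℂ) • X0) * star (((r⁻¹:ℝ):ℂ) • X0) = 1 := by
    rw [hsr, smul_mul_assoc, mul_smul_comm, hprod, smul_smul, smul_lit, Matrix.one_fin_two]
    refine mat2_ext ?_ ?_ ?_ ?_
    · exact hone
    · ring
    · ring
    · exact hone
  have hdet : (((r⁻¹:ℝ):ℂ) • X0).det = 1 := by
    rw [Matrix.det_smul, hdet0, Fintype.card_fin]
    calc ((r⁻¹:ℝ):ℂ)^2 * ((r:ℝ):ℂ)^2 = ((r⁻¹:ℝ):ℂ) * ((r⁻¹:ℝ):ℂ) * ((r:ℝ):ℂ)^2 := by ring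
    _ = 1 := hone
  have hinv : (((r⁻¹:ℝ):ℂ) • X0)⁻¹ = star (((r⁻¹:ℝ):ℂ) • X0) := Matrix.inv_eq_right_inv hUnit
  refine ⟨((r⁻¹:ℝ):ℂ) • X0, ⟨Matrix.mem_unitaryGroup_iff.mpr hUnit, hdet⟩, ?_⟩
  rw [hinv, hsr, smul_mul_assoc, smul_mul_assoc, mul_smul_comm, smul_smul, hG2, smul_lit]
  refine mat2_ext ?_ ?_ ?_ ?_
  · linear_combination (-((c:ℂ)+(y:ℂ)*Complex.I)) * hone
  · linear_combination (-b) * hone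
  · linear_combination ((starRingEnd ℂ) b) * hone
  · linear_combination (-((c:ℂ)-(y:ℂ)*Complex.I)) * hone

lemma key (k : ℕ) (n : ℝ) (h0 : 0 ≤ Real.pi * n / k) (h1 : Real.pi * n / k ≤ Real.pi)
    (a b : ℂ) (hre : a.re = Real.cos (Real.pi * n / k))
    (hn : Complex.normSq a + Complex.normSq b = 1) :
    !![a, b; -((starRingEnd ℂ) b), (starRingEnd ℂ) a] ∈ conjClass k n := by
  have hcs : Real.sin (Real.pi * n / k)^2 = 1 - Real.cos (Real.pi * n / k)^2 := Real.sin_sq _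
  have hb2 : Complex.normSq b = Real.sin (Real.pi * n / k)^2 - a.im^2 := by
    rw [Complex.normSq_apply, hre] at hn
    nlinarith [hn, hcs]
  have hs0 : 0 ≤ Real.sin (Real.pi * n / k) := Real.sin_nonneg_of_nonneg_of_le_pi h0 h1
  have hyle : a.im ≤ Real.sin (Real.pi * n / k) := by
    nlinarith [Complex.normSq_nonneg b]
  have ha : a = ((Real.cos (Real.pi * n / k) : ℝ):ℂ) + ((a.im : ℝ):ℂ) * Complex.I := by
    rw [← hre]
    exact (Complex.re_add_im a).symm
  have hca : (starRingEnd ℂ) a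
      = ((Real.cos (Real.pi * n / k) : ℝ):ℂ) - ((a.im : ℝ):ℂ) * Complex.I := by
    rw [← hre]
    apply Complex.ext <;> simp
  by_cases hY : a.im = Real.sin (Real.pi * n / k)
  · have hb0 : b = 0 := by
      have h : Complex.normSq b = 0 := by rw [hb2, hY]; ring
      exact Complex.normSq_eq_zero.mp h
    refine ⟨1, ⟨Submonoid.one_mem _, Matrix.det_one⟩, ?_⟩
    have hM : !![a, b; -((starRingEnd ℂ) b), (starRingEnd ℂ) a]
        = !![((Real.cos (Real.pi * n / k) : ℝ):ℂ) + ((Real.sin (Real.pi * n / k) : ℝ):ℂ) * Complex.I, 0;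
            0, ((Real.cos (Real.pi * n / k) : ℝ):ℂ) - ((Real.sin (Real.pi * n / k) : ℝ):ℂ) * Complex.I] :=
      mat2_ext (by rw [ha, hY]) hb0 (by rw [hb0]; simp) (by rw [hca, hY])
    rw [hM, inv_one, one_mul, mul_one, tmat_eq]
  · have hylt : a.im < Real.sin (Real.pi * n / k) := lt_of_le_of_ne hyle hY
    have hspos : 0 < Real.sin (Real.pi * n / k) := by
      nlinarith [Complex.normSq_nonneg b]
    have h2pos : 0 < 2 * Real.sin (Real.pi * n / k) * (Real.sin (Real.pi * n / k) - a.im) := by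
      nlinarith
    have hr2 : (Real.sqrt (2 * Real.sin (Real.pi * n / k) * (Real.sin (Real.pi * n / k) - a.im)))^2
        = 2 * Real.sin (Real.pi * n / k) * (Real.sin (Real.pi * n / k) - a.im) :=
      Real.sq_sqrt h2pos.le
    have hrpos : 0 < Real.sqrt (2 * Real.sin (Real.pi * n / k) * (Real.sin (Real.pi * n / k) - a.im)) :=
      Real.sqrt_pos.mpr h2pos
    have hr2c : ((Real.sqrt (2 * Real.sin (Real.pi * n / k) * (Real.sin (Real.pi * n / k) - a.im)) : ℝ):ℂ)^2
        = 2*((Real.sin (Real.pi * n / k) : ℝ):ℂ)*(((Real.sin (Real.pi * n / k) : ℝ):ℂ)-((a.im : ℝ):ℂ)) := by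
      have h := congrArg (fun t : ℝ => (t:ℂ)) hr2
      push_cast at h ⊢
      exact_mod_cast hr2
    have hbbc : b * (starRingEnd ℂ) b
        = ((Real.sin (Real.pi * n / k) : ℝ):ℂ)^2 - ((a.im : ℝ):ℂ)^2 := by
      rw [Complex.mul_conj, hb2]
      push_cast
      ring
    obtain ⟨x, hx, hEq⟩ := core (Real.cos (Real.pi * n / k)) (Real.sin (Real.pi * n / k)) a.im
      (Real.sqrt (2 * Real.sin (Real.pi * n / k) * (Real.sin (Real.pi * n / k) - a.im)))
      b hbbc hr2c hrpos.ne'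
    refine ⟨x, hx, ?_⟩
    have hM : !![a, b; -((starRingEnd ℂ) b), (starRingEnd ℂ) a]
        = !![((Real.cos (Real.pi * n / k) : ℝ):ℂ) + ((a.im : ℝ):ℂ) * Complex.I, b;
            -((starRingEnd ℂ) b), ((Real.cos (Real.pi * n / k) : ℝ):ℂ) - ((a.im : ℝ):ℂ) * Complex.I] :=
      mat2_ext ha rfl rfl hca
    rw [hM, tmat_eq]
    exact hEq



lemma conjE (x y : ℝ) : (starRingEnd ℂ) ((x:ℂ) + (y:ℂ) * Complex.I)
    = (x:ℂ) - (y:ℂ) * Complex.I := by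
  apply Complex.ext <;> simp

lemma tmat_mem (k : ℕ) (l : ℝ) : tmat k l ∈ conjClass k l :=
  ⟨1, ⟨Submonoid.one_mem _, Matrix.det_one⟩, by rw [inv_one, one_mul, mul_one]⟩

lemma cos_bound (α β γ : ℝ) (hα0 : 0 ≤ α) (hαπ : α ≤ Real.pi) (hγπ : γ ≤ Real.pi)
    (hl : |α - β| ≤ γ) (hu1 : γ ≤ α + β) (hu2 : γ ≤ 2*Real.pi - α - β) :
    (Real.cos α * Real.cos β - Real.cos γ)^2 ≤ (Real.sin α * Real.sin β)^2 := by
  have hγ0 : 0 ≤ γ := le_trans (abs_nonneg _) hl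
  have h1 : Real.cos γ ≤ Real.cos α * Real.cos β + Real.sin α * Real.sin β := by
    have h := Real.cos_le_cos_of_nonneg_of_le_pi (abs_nonneg (α-β)) hγπ hl
    rw [Real.cos_abs, Real.cos_sub] at h
    linarith
  have h2 : Real.cos α * Real.cos β - Real.sin α * Real.sin β ≤ Real.cos γ := by
    rw [← Real.cos_add]
    by_cases h : α + β ≤ Real.pi
    · exact Real.cos_le_cos_of_nonneg_of_le_pi hγ0 h hu1
    · have e : Real.cos (α+β) = Real.cos (2*Real.pi - α - β) := by
        rw [show 2*Real.pi - α - β = 2*Real.pi - (α+β) by ring, Real.cos_two_pi_sub]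
      rw [e]
      exact Real.cos_le_cos_of_nonneg_of_le_pi hγ0 (by linarith) hu2
  nlinarith [h1, h2]

lemma main_con (k : ℕ) (l m n : ℝ)
    (hsl : 0 < Real.sin (Real.pi*l/k))
    (hm0 : 0 ≤ Real.pi*m/k) (hmpi : Real.pi*m/k ≤ Real.pi)
    (hn0 : 0 ≤ Real.pi*n/k) (hnpi : Real.pi*n/k ≤ Real.pi)
    (hbound : (Real.cos (Real.pi*l/k) * Real.cos (Real.pi*m/k) - Real.cos (Real.pi*n/k))^2
      ≤ (Real.sin (Real.pi*l/k) * Real.sin (Real.pi*m/k))^2) :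
    (Tset k l m n).Nonempty := by
  set t : ℝ := (Real.cos (Real.pi*l/k) * Real.cos (Real.pi*m/k) - Real.cos (Real.pi*n/k))
      / Real.sin (Real.pi*l/k) with ht
  have hts : t^2 ≤ Real.sin (Real.pi*m/k)^2 := by
    rw [ht, div_pow, div_le_iff₀ (by positivity)]
    nlinarith [hbound]
  set s' : ℝ := Real.sqrt (Real.sin (Real.pi*m/k)^2 - t^2) with hs'
  have hs'2 : s'^2 = Real.sin (Real.pi*m/k)^2 - t^2 := Real.sq_sqrt (by linarith)
  have hA : Complex.normSq (((Real.cos (Real.pi*m/k) : ℝ):ℂ) + ((t : ℝ):ℂ) * Complex.I)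
      = Real.cos (Real.pi*m/k)^2 + t^2 := Complex.normSq_add_mul_I _ _
  have hB : Complex.normSq (((s' : ℝ):ℂ) * Complex.I) = s'^2 := by
    rw [Complex.normSq_mul, Complex.normSq_I, Complex.normSq_ofReal, mul_one, sq]
  have hsum : Complex.normSq (((Real.cos (Real.pi*m/k) : ℝ):ℂ) + ((t : ℝ):ℂ) * Complex.I)
      + Complex.normSq (((s' : ℝ):ℂ) * Complex.I) = 1 := by
    rw [hA, hB, hs'2]
    have := Real.sin_sq_add_cos_sq (Real.pi*m/k)
    linarith
  have hmem2 : !![((Real.cos (Real.pi*m/k) : ℝ):ℂ) + ((t : ℝ):ℂ) * Complex.I, ((s' : ℝ):ℂ) * Complex.I;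
      -((starRingEnd ℂ) (((s' : ℝ):ℂ) * Complex.I)),
      (starRingEnd ℂ) (((Real.cos (Real.pi*m/k) : ℝ):ℂ) + ((t : ℝ):ℂ) * Complex.I)] ∈ conjClass k m := by
    refine key k m hm0 hmpi _ _ ?_ hsum
    simp only [Complex.add_re, Complex.ofReal_re, Complex.mul_re, Complex.ofReal_im,
      Complex.I_re, Complex.I_im]
    ring
  have hcg : Real.cos (Real.pi*l/k) * Real.cos (Real.pi*m/k) - Real.sin (Real.pi*l/k) * t
      = Real.cos (Real.pi*n/k) := by
    rw [ht]
    field_simp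
    ring
  have hEA : (((Real.cos (Real.pi*l/k) : ℝ):ℂ) + ((Real.sin (Real.pi*l/k) : ℝ):ℂ) * Complex.I)
      * (((Real.cos (Real.pi*m/k) : ℝ):ℂ) + ((t : ℝ):ℂ) * Complex.I)
      = ((Real.cos (Real.pi*l/k) * Real.cos (Real.pi*m/k) - Real.sin (Real.pi*l/k) * t : ℝ):ℂ)
        + ((Real.cos (Real.pi*l/k) * t + Real.sin (Real.pi*l/k) * Real.cos (Real.pi*m/k) : ℝ):ℂ) * Complex.I := by
    simp only [Complex.ofReal_sub, Complex.ofReal_mul, Complex.ofReal_add]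
    linear_combination (((Real.sin (Real.pi*l/k) : ℝ):ℂ) * ((t:ℝ):ℂ)) * Complex.I_sq
  have hre3 : ((((Real.cos (Real.pi*l/k) : ℝ):ℂ) + ((Real.sin (Real.pi*l/k) : ℝ):ℂ) * Complex.I)
      * (((Real.cos (Real.pi*m/k) : ℝ):ℂ) + ((t : ℝ):ℂ) * Complex.I)).re = Real.cos (Real.pi*n/k) := by
    rw [hEA]
    simp only [Complex.add_re, Complex.ofReal_re, Complex.mul_re, Complex.ofReal_im,
      Complex.I_re, Complex.I_im]
    linear_combination hcg
  have hsum3 : Complex.normSq ((((Real.cos (Real.pi*l/k) : ℝ):ℂ) + ((Real.sin (Real.pi*l/k) : ℝ):ℂ) * Complex.I)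
        * (((Real.cos (Real.pi*m/k) : ℝ):ℂ) + ((t : ℝ):ℂ) * Complex.I))
      + Complex.normSq ((((Real.cos (Real.pi*l/k) : ℝ):ℂ) + ((Real.sin (Real.pi*l/k) : ℝ):ℂ) * Complex.I)
        * (((s' : ℝ):ℂ) * Complex.I)) = 1 := by
    rw [Complex.normSq_mul, Complex.normSq_mul, ← mul_add, hsum, mul_one,
      Complex.normSq_add_mul_I]
    have := Real.sin_sq_add_cos_sq (Real.pi*l/k)
    linarith
  have hmem3 : !![(((Real.cos (Real.pi*l/k) : ℝ):ℂ) + ((Real.sin (Real.pi*l/k) : ℝ):ℂ) * Complex.I)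
        * (((Real.cos (Real.pi*m/k) : ℝ):ℂ) + ((t : ℝ):ℂ) * Complex.I),
      (((Real.cos (Real.pi*l/k) : ℝ):ℂ) + ((Real.sin (Real.pi*l/k) : ℝ):ℂ) * Complex.I) * (((s' : ℝ):ℂ) * Complex.I);
      -((starRingEnd ℂ) ((((Real.cos (Real.pi*l/k) : ℝ):ℂ) + ((Real.sin (Real.pi*l/k) : ℝ):ℂ) * Complex.I) * (((s' : ℝ):ℂ) * Complex.I))),
      (starRingEnd ℂ) ((((Real.cos (Real.pi*l/k) : ℝ):ℂ) + ((Real.sin (Real.pi*l/k) : ℝ):ℂ) * Complex.I)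
        * (((Real.cos (Real.pi*m/k) : ℝ):ℂ) + ((t : ℝ):ℂ) * Complex.I))] ∈ conjClass k n :=
    key k n hn0 hnpi _ _ hre3 hsum3
  have hprodeq : tmat k l * !![((Real.cos (Real.pi*m/k) : ℝ):ℂ) + ((t : ℝ):ℂ) * Complex.I, ((s' : ℝ):ℂ) * Complex.I;
      -((starRingEnd ℂ) (((s' : ℝ):ℂ) * Complex.I)),
      (starRingEnd ℂ) (((Real.cos (Real.pi*m/k) : ℝ):ℂ) + ((t : ℝ):ℂ) * Complex.I)]
      = !![(((Real.cos (Real.pi*l/k) : ℝ):ℂ) + ((Real.sin (Real.pi*l/k) : ℝ):ℂ) * Complex.I)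
        * (((Real.cos (Real.pi*m/k) : ℝ):ℂ) + ((t : ℝ):ℂ) * Complex.I),
      (((Real.cos (Real.pi*l/k) : ℝ):ℂ) + ((Real.sin (Real.pi*l/k) : ℝ):ℂ) * Complex.I) * (((s' : ℝ):ℂ) * Complex.I);
      -((starRingEnd ℂ) ((((Real.cos (Real.pi*l/k) : ℝ):ℂ) + ((Real.sin (Real.pi*l/k) : ℝ):ℂ) * Complex.I) * (((s' : ℝ):ℂ) * Complex.I))),
      (starRingEnd ℂ) ((((Real.cos (Real.pi*l/k) : ℝ):ℂ) + ((Real.sin (Real.pi*l/k) : ℝ):ℂ) * Complex.I)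
        * (((Real.cos (Real.pi*m/k) : ℝ):ℂ) + ((t : ℝ):ℂ) * Complex.I))] := by
    rw [tmat_eq, Matrix.mul_fin_two]
    refine mat2_ext (by ring) (by ring) ?_ ?_
    · conv_rhs => rw [RingHom.map_mul]
      rw [show (starRingEnd ℂ) (((Real.cos (Real.pi*l/k) : ℝ):ℂ) + ((Real.sin (Real.pi*l/k) : ℝ):ℂ) * Complex.I)
        = ((Real.cos (Real.pi*l/k) : ℝ):ℂ) - ((Real.sin (Real.pi*l/k) : ℝ):ℂ) * Complex.I from conjE _ _]
      ring
    · conv_rhs => rw [RingHom.map_mul]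
      rw [show (starRingEnd ℂ) (((Real.cos (Real.pi*l/k) : ℝ):ℂ) + ((Real.sin (Real.pi*l/k) : ℝ):ℂ) * Complex.I)
        = ((Real.cos (Real.pi*l/k) : ℝ):ℂ) - ((Real.sin (Real.pi*l/k) : ℝ):ℂ) * Complex.I from conjE _ _]
      ring
  exact ⟨(tmat k l, _), tmat_mem k l, hmem2, by rw [hprodeq]; exact hmem3⟩

lemma tmat_zero (k : ℕ) (hk : 0 < k) : tmat k ((0:ℤ):ℝ) = 1 := by
  rw [tmat_eq, Matrix.one_fin_two]
  have h : Real.pi * ((0:ℤ):ℝ) / k = 0 := by norm_num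
  rw [h, Real.cos_zero, Real.sin_zero]
  norm_num

end Stmt1Aux

open Stmt1Aux in
theorem stmt1 (k : ℕ) (hk : 0 < k) (lam mu nu : ℤ)
    (hlam : 0 ≤ lam ∧ lam ≤ k) (hmu : 0 ≤ mu ∧ mu ≤ k) (hnu : 0 ≤ nu ∧ nu ≤ k)
    (heven : Even (lam + mu - nu))
    (h1 : |lam - mu| ≤ nu) (h2 : nu ≤ min (lam + mu) (2 * k - lam - mu)) :
    (Tset k (lam : ℝ) (mu : ℝ) (nu : ℝ)).Nonempty := by
  obtain ⟨hl0, hlk⟩ := hlam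
  obtain ⟨hm0, hmk⟩ := hmu
  obtain ⟨hn0, hnk⟩ := hnu
  have hkR : (0:ℝ) < k := by exact_mod_cast hk
  have hπ : (0:ℝ) < Real.pi := Real.pi_pos
  by_cases hlam0 : lam = 0
  · -- ν = μ, take (1, t_μ)
    have hnm : nu = mu := by
      have h2' := le_trans h2 (min_le_left _ _)
      rw [hlam0, zero_sub, abs_neg, abs_of_nonneg hm0] at h1
      omega
    refine ⟨(tmat k (lam:ℝ), tmat k (mu:ℝ)), tmat_mem _ _, tmat_mem _ _, ?_⟩
    show tmat k (lam:ℝ) * tmat k (mu:ℝ) ∈ conjClass k (nu:ℝ)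
    have hl : ((lam:ℤ):ℝ) = ((0:ℤ):ℝ) := by rw [hlam0]
    have hn' : ((nu:ℤ):ℝ) = ((mu:ℤ):ℝ) := by exact_mod_cast hnm
    rw [hl, tmat_zero k hk, one_mul, hn']
    exact tmat_mem _ _
  by_cases hlamk : lam = (k:ℤ)
  · -- ν = k - μ
    have hnm : nu = (k:ℤ) - mu := by
      have h2' := le_trans h2 (min_le_right _ _)
      rw [hlamk, abs_of_nonneg (by omega : (0:ℤ) ≤ (k:ℤ) - mu)] at h1
      omega
    refine ⟨(tmat k (lam:ℝ), tmat k (mu:ℝ)), tmat_mem _ _, tmat_mem _ _, ?_⟩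
    show tmat k (lam:ℝ) * tmat k (mu:ℝ) ∈ conjClass k (nu:ℝ)
    have hJunit : !![(0:ℂ),-1;1,0] * star !![(0:ℂ),-1;1,0] = 1 := by
      have hs : star !![(0:ℂ),-1;1,0] = !![(0:ℂ),1;-1,0] := by
        rw [Matrix.star_eq_conjTranspose]
        ext i j
        fin_cases i <;> fin_cases j <;> simp [Matrix.conjTranspose_apply]
      rw [hs, Matrix.mul_fin_two, Matrix.one_fin_two]
      norm_num
    have hJdet : Matrix.det !![(0:ℂ),-1;1,0] = 1 := by simp [Matrix.det_fin_two_of]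
    have hJinv : (!![(0:ℂ),-1;1,0])⁻¹ = !![(0:ℂ),1;-1,0] :=
      Matrix.inv_eq_right_inv (by rw [Matrix.mul_fin_two, Matrix.one_fin_two]; norm_num)
    refine ⟨!![(0:ℂ),-1;1,0], ⟨Matrix.mem_unitaryGroup_iff.mpr hJunit, hJdet⟩, ?_⟩
    rw [hJinv]
    have hα : Real.pi * (lam:ℝ) / k = Real.pi := by
      rw [hlamk]
      push_cast
      field_simp
    have hγ : Real.pi * (nu:ℝ) / k = Real.pi - Real.pi * (mu:ℝ) / k := by
      rw [hnm]
      push_cast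
      field_simp
    rw [tmat_eq, tmat_eq, tmat_eq, hα, hγ, Real.cos_pi, Real.sin_pi, Real.cos_pi_sub,
      Real.sin_pi_sub, Matrix.mul_fin_two, Matrix.mul_fin_two, Matrix.mul_fin_two]
    refine mat2_ext ?_ ?_ ?_ ?_ <;> push_cast <;> ring
  · -- main case: 0 < lam < k
    have hl0' : (0:ℤ) < lam := lt_of_le_of_ne hl0 (Ne.symm hlam0)
    have hlk' : lam < (k:ℤ) := lt_of_le_of_ne hlk hlamk
    have hlR : (0:ℝ) < (lam:ℝ) := by exact_mod_cast hl0'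
    have hlkR : (lam:ℝ) < (k:ℝ) := by exact_mod_cast hlk'
    have hα0 : 0 < Real.pi * (lam:ℝ) / k := by positivity
    have hαπ : Real.pi * (lam:ℝ) / k < Real.pi := by
      rw [div_lt_iff₀ hkR]
      nlinarith
    have hmR : (0:ℝ) ≤ (mu:ℝ) := by exact_mod_cast hm0
    have hmkR : (mu:ℝ) ≤ (k:ℝ) := by exact_mod_cast hmk
    have hnR : (0:ℝ) ≤ (nu:ℝ) := by exact_mod_cast hn0
    have hnkR : (nu:ℝ) ≤ (k:ℝ) := by exact_mod_cast hnk
    have hβ0 : 0 ≤ Real.pi * (mu:ℝ) / k := by positivity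
    have hβπ : Real.pi * (mu:ℝ) / k ≤ Real.pi := by
      rw [div_le_iff₀ hkR]
      nlinarith
    have hγ0 : 0 ≤ Real.pi * (nu:ℝ) / k := by positivity
    have hγπ : Real.pi * (nu:ℝ) / k ≤ Real.pi := by
      rw [div_le_iff₀ hkR]
      nlinarith
    -- fusion inequalities over ℝ
    have h1R : |(lam:ℝ) - (mu:ℝ)| ≤ (nu:ℝ) := by exact_mod_cast h1
    have h2aR : (nu:ℝ) ≤ (lam:ℝ) + (mu:ℝ) := by
      exact_mod_cast le_trans h2 (min_le_left _ _)
    have h2bR : (nu:ℝ) ≤ 2*(k:ℝ) - (lam:ℝ) - (mu:ℝ) := by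
      exact_mod_cast le_trans h2 (min_le_right _ _)
    have hlab : |Real.pi * (lam:ℝ) / k - Real.pi * (mu:ℝ) / k| ≤ Real.pi * (nu:ℝ) / k := by
      calc |Real.pi * (lam:ℝ) / k - Real.pi * (mu:ℝ) / k|
          = (Real.pi/k) * |(lam:ℝ) - (mu:ℝ)| := by
            rw [show Real.pi * (lam:ℝ) / k - Real.pi * (mu:ℝ) / k
              = (Real.pi/k) * ((lam:ℝ) - (mu:ℝ)) from by ring, abs_mul,
              abs_of_pos (div_pos hπ hkR)]
        _ ≤ (Real.pi/k) * (nu:ℝ) := by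
            apply mul_le_mul_of_nonneg_left h1R (le_of_lt (div_pos hπ hkR))
        _ = Real.pi * (nu:ℝ) / k := by ring
    have hu1 : Real.pi * (nu:ℝ) / k ≤ Real.pi * (lam:ℝ) / k + Real.pi * (mu:ℝ) / k := by
      rw [show Real.pi * (lam:ℝ) / k + Real.pi * (mu:ℝ) / k
        = Real.pi * ((lam:ℝ) + (mu:ℝ)) / k from by ring]
      gcongr
    have hu2 : Real.pi * (nu:ℝ) / k ≤ 2*Real.pi - Real.pi * (lam:ℝ) / k - Real.pi * (mu:ℝ) / k := by
      have e : 2*Real.pi - Real.pi * (lam:ℝ) / k - Real.pi * (mu:ℝ) / k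
          = Real.pi * (2*(k:ℝ) - (lam:ℝ) - (mu:ℝ)) / k := by
        field_simp
      rw [e]
      gcongr
    have hbound := cos_bound (Real.pi * (lam:ℝ) / k) (Real.pi * (mu:ℝ) / k) (Real.pi * (nu:ℝ) / k)
      (le_of_lt hα0) (le_of_lt hαπ) hγπ hlab hu1 hu2
    exact main_con k (lam:ℝ) (mu:ℝ) (nu:ℝ) (Real.sin_pos_of_pos_of_lt_pi hα0 hαπ)
      hβ0 hβπ hγ0 hγπ hbound
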